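/- Let v and c be real parameters with 0 < v < c, and let f(z) = (1/2)·z·(1−z)·(v − c·z). If γ : ℝ → ℝ is differentiable and satisfies γ'(t) = f(γ(t)) for all t ≥ 0, with initial condition 0 < γ(0) < 1, then γ(t) converges to v/c as t → ∞. -/

import Mathlib

noncomputable section

/-- The right-hand side of the reduced replicator ODE of the
two-strategy Hawk-Dove game. -/
def f (v c : ℝ) (z : ℝ) : ℝ := (1/2) * z * (1 - z) * (v - c * z)

open Set Filter

/-- If the vector field is negative on `(b, b')` and the solution starts `≤ b`,
it stays `≤ b`. -/
lemma trap_above (g : ℝ → ℝ) (γ : ℝ → ℝ) (hγ : Differentiable ℝ γ)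
    (t₀ : ℝ) (hode : ∀ t, t₀ ≤ t → deriv γ t = g (γ t))
    (b b' : ℝ) (hbb : b < b') (hneg : ∀ z, b < z → z < b' → g z < 0)
    (h0 : γ t₀ ≤ b) : ∀ t, t₀ ≤ t → γ t ≤ b := by
  intro t₁ ht₁
  by_contra h
  push_neg at h
  set S : Set ℝ := Icc t₀ t₁ ∩ γ ⁻¹' Iic b with hS
  have hSclosed : IsClosed S := isClosed_Icc.inter (isClosed_Iic.preimage hγ.continuous)
  have hSne : S.Nonempty := ⟨t₀, ⟨le_refl _, ht₁⟩, h0⟩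
  have hSbdd : BddAbove S := BddAbove.mono (inter_subset_left) bddAbove_Icc
  set τ := sSup S with hτdef
  have hτS : τ ∈ S := hSclosed.csSup_mem hSne hSbdd
  clear_value τ
  have hτ0 : t₀ ≤ τ := hτS.1.1
  have hτ1 : τ ≤ t₁ := hτS.1.2
  have hγτ : γ τ ≤ b := hτS.2
  have hτlt : τ < t₁ := lt_of_le_of_ne hτ1 (by rintro rfl; exact absurd hγτ (not_le.mpr h))
  have key : ∀ s, τ < s → s ≤ t₁ → b < γ s := by
    intro s hs hs1
    by_contra hbs
    push_neg at hbs
    have : s ∈ S := ⟨⟨le_trans hτ0 hs.le, hs1⟩, hbs⟩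
    have hsτ : s ≤ τ := hτdef ▸ le_csSup hSbdd this
    exact absurd hsτ (not_le.mpr hs)
  -- find σ : endpoint of an interval where γ ∈ (b, b')
  obtain ⟨σ, hτσ, hσ1, hσb, hmid⟩ :
      ∃ σ, τ < σ ∧ σ ≤ t₁ ∧ b < γ σ ∧ ∀ s, τ < s → s < σ → b < γ s ∧ γ s < b' := by
    set U : Set ℝ := Icc τ t₁ ∩ γ ⁻¹' Ici b' with hU
    by_cases hUne : U.Nonempty
    · have hUclosed : IsClosed U := isClosed_Icc.inter (isClosed_Ici.preimage hγ.continuous)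
      have hUbdd : BddBelow U := BddBelow.mono (inter_subset_left) bddBelow_Icc
      set σ := sInf U with hσdef
      have hσU : σ ∈ U := hUclosed.csInf_mem hUne hUbdd
      have hσInf : ∀ s ∈ U, σ ≤ s := fun s hs => csInf_le hUbdd hs
      clear_value σ
      have hστ : τ ≤ σ := hσU.1.1
      have hσγ : b' ≤ γ σ := hσU.2
      have hστ' : τ < σ := lt_of_le_of_ne hστ (by
        rintro rfl; exact absurd hσγ (not_le.mpr (lt_of_le_of_lt hγτ hbb)))
      refine ⟨σ, hστ', hσU.1.2, lt_of_lt_of_le hbb hσγ, ?_⟩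
      intro s hs hs'
      refine ⟨key s hs (hs'.le.trans hσU.1.2), ?_⟩
      by_contra hb'
      push_neg at hb'
      have : s ∈ U := ⟨⟨hs.le, hs'.le.trans hσU.1.2⟩, hb'⟩
      exact absurd (hσInf s this) (not_le.mpr hs')
    · refine ⟨t₁, hτlt, le_refl _, h, ?_⟩
      intro s hs hs'
      refine ⟨key s hs hs'.le, ?_⟩
      by_contra hb'
      push_neg at hb'
      exact hUne ⟨s, ⟨hs.le, hs'.le⟩, hb'⟩
  -- γ is strictly decreasing on [τ, σ], contradiction
  have hanti : StrictAntiOn γ (Icc τ σ) := by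
    apply strictAntiOn_of_deriv_neg (convex_Icc τ σ) hγ.continuous.continuousOn
    intro s hs
    rw [interior_Icc] at hs
    rw [hode s (le_trans hτ0 hs.1.le)]
    obtain ⟨hb1, hb2⟩ := hmid s hs.1 hs.2
    exact hneg _ hb1 hb2
  have : γ σ < γ τ := hanti ⟨le_refl _, hτσ.le⟩ ⟨hτσ.le, le_refl _⟩ hτσ
  exact absurd (lt_of_le_of_lt hγτ hσb) (not_lt.mpr this.le)

/-- If the vector field is positive on `(a', a)` and the solution starts `≥ a`,
it stays `≥ a`. -/
lemma trap_below (g : ℝ → ℝ) (γ : ℝ → ℝ) (hγ : Differentiable ℝ γ)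
    (t₀ : ℝ) (hode : ∀ t, t₀ ≤ t → deriv γ t = g (γ t))
    (a' a : ℝ) (haa : a' < a) (hpos : ∀ z, a' < z → z < a → 0 < g z)
    (h0 : a ≤ γ t₀) : ∀ t, t₀ ≤ t → a ≤ γ t := by
  have hδ : Differentiable ℝ (fun t => -(γ t)) := hγ.neg
  have hode' : ∀ t, t₀ ≤ t → deriv (fun t => -(γ t)) t = (fun z => -(g (-z))) ((fun t => -(γ t)) t) := by
    intro t ht
    simp only [deriv.fun_neg, hode t ht, neg_neg]
  have := trap_above (fun z => -(g (-z))) (fun t => -(γ t)) hδ t₀ hode' (-a) (-a')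
    (by linarith) (fun z hz hz' => by
      simp only [neg_neg, neg_neg_iff_pos] at *
      have := hpos (-z) (by linarith) (by linarith)
      linarith)
    (by simpa using h0)
  intro t ht
  have := this t ht
  simpa using this

/-- Convergence from below: if γ starts in (a', p] with g > 0 on (a', p) and
g < 0 on (p, b'), then γ → p. -/
lemma converge_from_below (g : ℝ → ℝ) (hg : Continuous g)
    (a' p b' : ℝ) (γ : ℝ → ℝ) (hγ : Differentiable ℝ γ)
    (hode : ∀ t, (0:ℝ) ≤ t → deriv γ t = g (γ t))
    (ha : a' < γ 0) (hp : γ 0 ≤ p) (hb : p < b')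
    (hpos : ∀ z, a' < z → z < p → 0 < g z)
    (hneg : ∀ z, p < z → z < b' → g z < 0) :
    Tendsto γ atTop (nhds p) := by
  have ha'p : a' < p := lt_of_lt_of_le ha hp
  -- upper bound forever
  have hupper : ∀ t, (0:ℝ) ≤ t → γ t ≤ p :=
    trap_above g γ hγ 0 hode p b' hb hneg hp
  -- lower bound forever
  have hlower : ∀ t, (0:ℝ) ≤ t → γ 0 ≤ γ t := by
    apply trap_below g γ hγ 0 hode a' (γ 0) ha
    · intro z hz hz'
      exact hpos z hz (lt_of_lt_of_le hz' hp)
    · exact le_refl _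
  rw [Metric.tendsto_atTop]
  intro ε hε
  -- first: find T ≥ 0 with p - ε < γ T
  have hescape : ∃ T, 0 ≤ T ∧ p - ε < γ T := by
    by_cases hcase : p - ε < γ 0
    · exact ⟨0, le_refl _, hcase⟩
    push_neg at hcase
    by_contra hno
    push_neg at hno
    -- γ t ∈ [γ 0, p - ε] for all t ≥ 0 : derivative bounded below
    set K : Set ℝ := Icc (γ 0) (p - ε) with hK
    have hKne : K.Nonempty := ⟨γ 0, le_refl _, hcase⟩
    obtain ⟨x₀, hx₀K, hx₀min⟩ := (isCompact_Icc).exists_isMinOn hKne hg.continuousOn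
    have hδpos : 0 < g x₀ := by
      apply hpos
      · exact lt_of_lt_of_le ha hx₀K.1
      · exact lt_of_le_of_lt hx₀K.2 (by linarith)
    set δ := g x₀ with hδ
    have hderiv_ge : ∀ t, (0:ℝ) ≤ t → δ ≤ deriv γ t := by
      intro t ht
      rw [hode t ht]
      exact hx₀min ⟨hlower t ht, hno t ht⟩
    -- h t = γ t - δ t is monotone on [0, ∞)
    have hd : ∀ s : ℝ, HasDerivAt (fun t => γ t - δ * t) (deriv γ s - δ) s := by
      intro s
      have h1 : HasDerivAt γ (deriv γ s) s := (hγ s).hasDerivAt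
      have h2 : HasDerivAt (fun t : ℝ => δ * t) δ s := by
        simpa using (hasDerivAt_id s).const_mul δ
      exact h1.sub h2
    have hdiff : Differentiable ℝ (fun t => γ t - δ * t) := fun s => (hd s).differentiableAt
    have hmono : MonotoneOn (fun t => γ t - δ * t) (Ici 0) := by
      apply monotoneOn_of_deriv_nonneg (convex_Ici 0) hdiff.continuous.continuousOn
        hdiff.differentiableOn
      intro t ht
      rw [interior_Ici] at ht
      rw [(hd t).deriv]
      linarith [hderiv_ge t ht.le]
    have hq : 0 ≤ (p - γ 0) / δ := div_nonneg (by linarith) hδpos.le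
    have hTpos : (0:ℝ) ≤ (p - γ 0) / δ + 1 := by linarith
    have hM := hmono (self_mem_Ici) (mem_Ici.mpr hTpos) hTpos
    simp only [mul_zero, sub_zero] at hM
    have hδT : δ * ((p - γ 0) / δ + 1) = (p - γ 0) + δ := by
      rw [mul_add, mul_one, mul_div_cancel₀ _ (ne_of_gt hδpos)]
    have hfin : p + δ ≤ γ ((p - γ 0) / δ + 1) := by nlinarith [hM, hδT]
    have := hno _ hTpos
    linarith
  obtain ⟨T, hT0, hTγ⟩ := hescape
  -- persistence: γ t ≥ γ T for t ≥ T
  have hpersist : ∀ t, T ≤ t → γ T ≤ γ t := by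
    apply trap_below g γ hγ T (fun t ht => hode t (le_trans hT0 ht)) a' (γ T)
      (lt_of_lt_of_le ha (hlower T hT0))
    · intro z hz hz'
      exact hpos z hz (lt_of_lt_of_le hz' (hupper T hT0))
    · exact le_refl _
  refine ⟨T, fun t ht => ?_⟩
  have ht0 : (0:ℝ) ≤ t := le_trans hT0 ht
  have h1 : γ t ≤ p := hupper t ht0
  have h2 : p - ε < γ t := lt_of_lt_of_le hTγ (hpersist t ht)
  rw [Real.dist_eq, abs_lt]
  constructor <;> linarith

theorem two_strategy_convergence (v c : ℝ) (hv : 0 < v) (hc : v < c)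
    (γ : ℝ → ℝ) (hγ : Differentiable ℝ γ)
    (hode : ∀ t : ℝ, 0 ≤ t → deriv γ t = f v c (γ t))
    (h0 : 0 < γ 0) (h1 : γ 0 < 1) :
    Filter.Tendsto γ Filter.atTop (nhds (v/c)) := by
  have hc0 : 0 < c := hv.trans hc
  have hp0 : 0 < v / c := div_pos hv hc0
  have hp1 : v / c < 1 := (div_lt_one hc0).mpr hc
  have hcont : Continuous (f v c) := by
    unfold f; continuity
  have hfpos : ∀ z, 0 < z → z < v / c → 0 < f v c z := by
    intro z hz hz'
    have h1z : z < 1 := hz'.trans hp1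
    have hvc : 0 < v - c * z := by
      have := (lt_div_iff₀ hc0).mp hz'
      linarith
    unfold f
    have := mul_pos (mul_pos (mul_pos (by norm_num : (0:ℝ) < 1/2) hz)
      (by linarith : (0:ℝ) < 1 - z)) hvc
    linarith
  have hfneg : ∀ z, v / c < z → z < 1 → f v c z < 0 := by
    intro z hz hz'
    have hz0 : 0 < z := hp0.trans hz
    have hvc : v - c * z < 0 := by
      have := (div_lt_iff₀ hc0).mp hz
      linarith
    unfold f
    have h1z : 0 < 1 - z := by linarith
    have hpp := mul_pos (mul_pos (by norm_num : (0:ℝ) < 1/2) hz0) h1z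
    have := mul_neg_of_pos_of_neg hpp hvc
    linarith
  by_cases hcase : γ 0 ≤ v / c
  · exact converge_from_below (f v c) hcont 0 (v / c) 1 γ hγ hode h0 hcase hp1 hfpos hfneg
  · push_neg at hcase
    have hδ : Differentiable ℝ (fun t => -(γ t)) := hγ.neg
    have hode' : ∀ t, (0:ℝ) ≤ t → deriv (fun t => -(γ t)) t
        = (fun z => -(f v c (-z))) ((fun t => -(γ t)) t) := by
      intro t ht
      simp only [deriv.fun_neg, hode t ht, neg_neg]
    have hconv : Tendsto (fun t => -(γ t)) atTop (nhds (-(v/c))) := by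
      apply converge_from_below (fun z => -(f v c (-z))) (by continuity)
        (-1) (-(v/c)) 0 _ hδ hode'
      · simpa using h1
      · simpa using hcase.le
      · simpa using hp0
      · intro z hz hz'
        have := hfneg (-z) (by linarith) (by linarith)
        linarith
      · intro z hz hz'
        have := hfpos (-z) (by linarith) (by linarith)
        linarith
    have := hconv.neg
    simpa using this
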